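/- Let d ≥ 1 and s be a positive integer. Suppose that every pure (d−1)-dimensional flag-no-square simplicial complex in which every (d−2)-dimensional face is contained in at least two facets has at least s facets. Then every pure d-dimensional flag-no-square simplicial complex Δ in which every (d−1)-dimensional face is contained in at least two facets satisfies f_0(Δ) > s and (d+1)·f_d(Δ) > s². -/

import Mathlib

open Finset

variable {V : Type} [DecidableEq V] [Fintype V]

/-- `K` is (the set of faces of) an abstract simplicial complex on `V`:
nonempty (contains the empty face) and closed under taking subsets. -/
def IsComplex (K : Finset (Finset V)) : Prop :=
  ∅ ∈ K ∧ ∀ σ ∈ K, ∀ τ ⊆ σ, τ ∈ K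

/-- The facets (maximal faces) of `K`. -/
def facets (K : Finset (Finset V)) : Finset (Finset V) :=
  K.filter fun σ => ∀ τ ∈ K, σ ⊆ τ → τ = σ

/-- `K` is pure `d`-dimensional: every facet has `d + 1` vertices. -/
def IsPure (K : Finset (Finset V)) (d : ℕ) : Prop :=
  ∀ σ ∈ facets K, σ.card = d + 1

/-- `fNum K i` is the number of `i`-dimensional faces (faces with `i + 1` vertices). -/
def fNum (K : Finset (Finset V)) (i : ℕ) : ℕ :=
  (K.filter fun σ => σ.card = i + 1).card

/-- `K` is flag: every set of vertices of `K` that are pairwise joined by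
edges of `K` is a face of `K`. -/
def IsFlag (K : Finset (Finset V)) : Prop :=
  ∀ τ : Finset V, (∀ v ∈ τ, ({v} : Finset V) ∈ K) →
    (∀ u ∈ τ, ∀ w ∈ τ, u ≠ w → ({u, w} : Finset V) ∈ K) → τ ∈ K

/-- `K` has no induced 4-cycle: there are no four distinct vertices `a b c d`
with `ab, bc, cd, da` faces and `ac, bd` non-faces. -/
def NoSquare (K : Finset (Finset V)) : Prop :=
  ¬ ∃ a b c d : V, ({a, b, c, d} : Finset V).card = 4 ∧
    ({a, b} : Finset V) ∈ K ∧ ({b, c} : Finset V) ∈ K ∧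
    ({c, d} : Finset V) ∈ K ∧ ({d, a} : Finset V) ∈ K ∧
    ({a, c} : Finset V) ∉ K ∧ ({b, d} : Finset V) ∉ K

/-- Every face with `d` vertices (i.e. of dimension `d - 1`) is contained in
at least two facets. -/
def NoFree (K : Finset (Finset V)) (d : ℕ) : Prop :=
  ∀ σ ∈ K, σ.card = d → 2 ≤ ((facets K).filter fun F => σ ⊆ F).card

/-- The link of a face `σ`. -/
def link (K : Finset (Finset V)) (σ : Finset V) : Finset (Finset V) :=
  K.filter fun τ => τ ∩ σ = ∅ ∧ τ ∪ σ ∈ K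

lemma mem_facets' {K : Finset (Finset V)} {F : Finset V} :
    F ∈ facets K ↔ F ∈ K ∧ ∀ τ ∈ K, F ⊆ τ → τ = F := by
  simp [facets]

lemma exists_facet {K : Finset (Finset V)} {σ : Finset V} (hσ : σ ∈ K) :
    ∃ F ∈ facets K, σ ⊆ F := by
  obtain ⟨F, hF, hmax⟩ := (K.filter fun τ => σ ⊆ τ).exists_max_image Finset.card
      ⟨σ, by simp [hσ]⟩
  rw [mem_filter] at hF
  refine ⟨F, mem_facets'.mpr ⟨hF.1, fun τ hτ hFτ => ?_⟩, hF.2⟩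
  have hτ' : τ ∈ K.filter fun τ => σ ⊆ τ := by
    simp [hτ, hF.2.trans hFτ]
  exact (Finset.eq_of_subset_of_card_le hFτ (hmax τ hτ')).symm

lemma face_card_le {K : Finset (Finset V)} {d : ℕ} (hpure : IsPure K d)
    {σ : Finset V} (hσ : σ ∈ K) : σ.card ≤ d + 1 := by
  obtain ⟨F, hF, hsub⟩ := exists_facet hσ
  exact le_trans (Finset.card_le_card hsub) (hpure F hF).le

lemma face_eq_facet {K : Finset (Finset V)} {d : ℕ} (hpure : IsPure K d)
    {σ : Finset V} (hσ : σ ∈ K) (hc : σ.card = d + 1) : σ ∈ facets K := by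
  obtain ⟨F, hF, hsub⟩ := exists_facet hσ
  have := Finset.eq_of_subset_of_card_le hsub (by rw [hpure F hF, hc])
  rwa [this]

lemma filter_card_eq_facets {K : Finset (Finset V)} {d : ℕ} (hpure : IsPure K d) :
    (K.filter fun σ => σ.card = d + 1) = facets K := by
  ext σ
  simp only [mem_filter]
  constructor
  · rintro ⟨h1, h2⟩; exact face_eq_facet hpure h1 h2
  · intro h; exact ⟨(mem_facets'.mp h).1, hpure σ h⟩

lemma mem_link_iff {K : Finset (Finset V)} {v : V} {τ : Finset V} :
    τ ∈ link K {v} ↔ τ ∈ K ∧ v ∉ τ ∧ insert v τ ∈ K := by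
  have hu : τ ∪ {v} = insert v τ := by rw [Finset.union_comm]; exact Finset.insert_eq v τ ▸ rfl
  simp only [link, mem_filter, hu]
  constructor
  · rintro ⟨h1, h2, h3⟩
    refine ⟨h1, fun hv => ?_, h3⟩
    have : v ∈ τ ∩ {v} := by simp [hv]
    simp [h2] at this
  · rintro ⟨h1, h2, h3⟩
    refine ⟨h1, ?_, h3⟩
    ext x
    simp only [mem_inter, mem_singleton, Finset.notMem_empty, iff_false, not_and]
    rintro hx rfl; exact h2 hx

lemma edge_mem {K : Finset (Finset V)} (hK : IsComplex K) {σ : Finset V} (hσ : σ ∈ K)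
    {u w : V} (hu : u ∈ σ) (hw : w ∈ σ) : ({u, w} : Finset V) ∈ K := by
  exact hK.2 σ hσ _ (by simp [Finset.insert_subset_iff, hu, hw])

lemma card_four' {a b c d : V} (hab : a ≠ b) (hac : a ≠ c) (had : a ≠ d)
    (hbc : b ≠ c) (hbd : b ≠ d) (hcd : c ≠ d) :
    ({a, b, c, d} : Finset V).card = 4 := by
  rw [Finset.card_insert_of_notMem (by simp [hab, hac, had]),
    Finset.card_insert_of_notMem (by simp [hbc, hbd]),
    Finset.card_insert_of_notMem (by simp [hcd]), Finset.card_singleton]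

lemma link_isComplex {K : Finset (Finset V)} (hK : IsComplex K) {v : V}
    (hv : ({v} : Finset V) ∈ K) : IsComplex (link K {v}) := by
  constructor
  · exact mem_link_iff.mpr ⟨hK.1, by simp, by simpa using hv⟩
  · intro σ hσ τ hτσ
    rw [mem_link_iff] at hσ ⊢
    refine ⟨hK.2 σ hσ.1 τ hτσ, fun h => hσ.2.1 (hτσ h), ?_⟩
    exact hK.2 _ hσ.2.2 _ (Finset.insert_subset_insert v hτσ)

lemma facets_link_iff {K : Finset (Finset V)} (hK : IsComplex K) {v : V} {F : Finset V} :
    F ∈ facets (link K {v}) ↔ v ∉ F ∧ insert v F ∈ facets K := by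
  constructor
  · intro h
    obtain ⟨hF, hmax⟩ := mem_facets'.mp h
    obtain ⟨hFK, hvF, hins⟩ := mem_link_iff.mp hF
    refine ⟨hvF, mem_facets'.mpr ⟨hins, fun G hG hsub => ?_⟩⟩
    have hvG : v ∈ G := hsub (mem_insert_self v F)
    have hG' : G.erase v ∈ link K {v} := by
      rw [mem_link_iff]
      exact ⟨hK.2 G hG _ (erase_subset v G), notMem_erase v G,
        by rwa [Finset.insert_erase hvG]⟩
    have hFG' : F ⊆ G.erase v := fun x hx =>
      Finset.mem_erase.mpr ⟨fun h' => hvF (h' ▸ hx), hsub (mem_insert_of_mem hx)⟩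
    have := hmax _ hG' hFG'
    rw [← Finset.insert_erase hvG, this]
  · rintro ⟨hvF, hfac⟩
    obtain ⟨hins, hmax⟩ := mem_facets'.mp hfac
    refine mem_facets'.mpr ⟨mem_link_iff.mpr
      ⟨hK.2 _ hins F (subset_insert v F), hvF, hins⟩, fun τ hτ hsub => ?_⟩
    obtain ⟨hτK, hvτ, hτins⟩ := mem_link_iff.mp hτ
    have := hmax _ hτins (Finset.insert_subset_insert v hsub)
    apply Finset.Subset.antisymm _ hsub
    intro x hx
    have : x ∈ insert v F := this ▸ mem_insert_of_mem hx
    rcases mem_insert.mp this with rfl | h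
    · exact absurd hx hvτ
    · exact h

lemma link_isPure {K : Finset (Finset V)} (hK : IsComplex K) {d : ℕ} (hd : 1 ≤ d)
    (hpure : IsPure K d) {v : V} : IsPure (link K {v}) (d - 1) := by
  intro τ hτ
  obtain ⟨hvτ, hfac⟩ := (facets_link_iff hK).mp hτ
  have := hpure _ hfac
  rw [Finset.card_insert_of_notMem hvτ] at this
  omega

lemma pair_left_mem {K : Finset (Finset V)} (hK : IsComplex K) {u w : V}
    (h : ({u, w} : Finset V) ∈ K) : ({u} : Finset V) ∈ K :=
  hK.2 _ h _ (by simp)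

lemma link_isFlag {K : Finset (Finset V)} (hK : IsComplex K) (hflag : IsFlag K)
    {v : V} (hv : ({v} : Finset V) ∈ K) : IsFlag (link K {v}) := by
  intro τ hsing hpair
  have hsingK : ∀ u ∈ τ, ({u} : Finset V) ∈ K := fun u hu =>
    (mem_link_iff.mp (hsing u hu)).1
  have hedgeuv : ∀ u ∈ τ, ({u, v} : Finset V) ∈ K := by
    intro u hu
    have := (mem_link_iff.mp (hsing u hu)).2.2
    have h2 : ({u, v} : Finset V) ⊆ insert v {u} := by
      intro x hx; rcases mem_insert.mp hx with rfl | hx <;> simp_all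
    exact hK.2 _ this _ h2
  have hvτ : v ∉ τ := fun h => (mem_link_iff.mp (hsing v h)).2.1 (by simp)
  have hτK : τ ∈ K := hflag τ hsingK fun u hu w hw huw =>
    (mem_link_iff.mp (hpair u hu w hw huw)).1
  rw [mem_link_iff]
  refine ⟨hτK, hvτ, ?_⟩
  apply hflag
  · intro u hu
    rcases mem_insert.mp hu with rfl | hu
    · exact hv
    · exact hsingK u hu
  · intro u hu w hw huw
    rcases mem_insert.mp hu with hu' | hu' <;> rcases mem_insert.mp hw with hw' | hw'
    · exact absurd (hu'.trans hw'.symm) huw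
    · subst hu'; rw [Finset.pair_comm]; exact hedgeuv w hw'
    · subst hw'; exact hedgeuv u hu'
    · exact (mem_link_iff.mp (hpair u hu' w hw' huw)).1

lemma link_edge_of_edge {K : Finset (Finset V)} (hK : IsComplex K) (hflag : IsFlag K)
    {v : V} {a c : V} (ha : ({a} : Finset V) ∈ link K {v})
    (hc : ({c} : Finset V) ∈ link K {v}) (hacK : ({a, c} : Finset V) ∈ K) :
    ({a, c} : Finset V) ∈ link K {v} := by
  obtain ⟨haK, hva, hia⟩ := mem_link_iff.mp ha
  obtain ⟨hcK, hvc, hic⟩ := mem_link_iff.mp hc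
  have hav : a ≠ v := fun h => hva (by simp [h])
  have hcv : c ≠ v := fun h => hvc (by simp [h])
  rw [mem_link_iff]
  refine ⟨hacK, by simp [Ne.symm hav, Ne.symm hcv], ?_⟩
  apply hflag
  · intro u hu
    rcases mem_insert.mp hu with rfl | hu
    · exact hK.2 _ hia _ (by simp)
    · rcases mem_insert.mp hu with rfl | hu
      · exact haK
      · rw [mem_singleton.mp hu]; exact hcK
  · intro u hu w hw huw
    have hmem : ∀ x ∈ insert v ({a, c} : Finset V), x = v ∨ x = a ∨ x = c := by
      intro x hx
      rcases mem_insert.mp hx with rfl | hx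
      · exact Or.inl rfl
      · rcases mem_insert.mp hx with rfl | hx
        · exact Or.inr (Or.inl rfl)
        · exact Or.inr (Or.inr (mem_singleton.mp hx))
    have hva' : ({v, a} : Finset V) ∈ K := by
      have : ({v, a} : Finset V) ⊆ insert v {a} := by intro x hx; simpa using hx
      exact hK.2 _ hia _ this
    have hvc' : ({v, c} : Finset V) ∈ K := by
      have : ({v, c} : Finset V) ⊆ insert v {c} := by intro x hx; simpa using hx
      exact hK.2 _ hic _ this
    rcases hmem u hu with rfl | rfl | rfl <;> rcases hmem w hw with rfl | rfl | rfl <;>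
      first
      | exact absurd rfl huw
      | assumption
      | (rw [Finset.pair_comm]; assumption)

lemma link_noSquare {K : Finset (Finset V)} (hK : IsComplex K) (hflag : IsFlag K)
    (hns : NoSquare K) {v : V} : NoSquare (link K {v}) := by
  rintro ⟨a, b, c, e, hcard, hab, hbc, hce, hea, hac, hbe⟩
  have hsub : ∀ τ ∈ link K {v}, ∀ σ ⊆ τ, σ ∈ link K {v} := by
    intro τ hτ σ hστ
    obtain ⟨h1, h2, h3⟩ := mem_link_iff.mp hτ
    exact mem_link_iff.mpr ⟨hK.2 τ h1 σ hστ, fun h => h2 (hστ h),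
      hK.2 _ h3 _ (Finset.insert_subset_insert v hστ)⟩
  have ha : ({a} : Finset V) ∈ link K {v} := hsub _ hab _ (by simp)
  have hb : ({b} : Finset V) ∈ link K {v} := hsub _ hab _ (by simp)
  have hc : ({c} : Finset V) ∈ link K {v} := hsub _ hbc _ (by simp)
  have he : ({e} : Finset V) ∈ link K {v} := hsub _ hce _ (by simp)
  exact hns ⟨a, b, c, e, hcard, (mem_link_iff.mp hab).1, (mem_link_iff.mp hbc).1,
    (mem_link_iff.mp hce).1, (mem_link_iff.mp hea).1,
    fun h => hac (link_edge_of_edge hK hflag ha hc h),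
    fun h => hbe (link_edge_of_edge hK hflag hb he h)⟩

lemma link_noFree {K : Finset (Finset V)} (hK : IsComplex K) {d : ℕ} (hd : 1 ≤ d)
    (hfree : NoFree K d) {v : V} : NoFree (link K {v}) (d - 1) := by
  intro σ hσ hcard
  obtain ⟨hσK, hvσ, hins⟩ := mem_link_iff.mp hσ
  have hinscard : (insert v σ).card = d := by
    rw [Finset.card_insert_of_notMem hvσ, hcard]; omega
  have h2 := hfree _ hins hinscard
  have : ((facets K).filter fun F => insert v σ ⊆ F).card ≤
      ((facets (link K {v})).filter fun F => σ ⊆ F).card := by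
    apply Finset.card_le_card_of_injOn (fun F => F.erase v)
    · intro F hF
      rw [mem_coe, mem_filter] at hF ⊢
      have hvF : v ∈ F := hF.2 (mem_insert_self v σ)
      refine ⟨(facets_link_iff hK).mpr ⟨notMem_erase v F, by rw [Finset.insert_erase hvF]; exact hF.1⟩, ?_⟩
      intro x hx
      exact Finset.mem_erase.mpr ⟨fun h => hvσ (h ▸ hx), hF.2 (mem_insert_of_mem hx)⟩
    · intro F hF F' hF' hh
      rw [mem_coe, mem_filter] at hF hF'
      have hvF : v ∈ F := hF.2 (mem_insert_self v σ)
      have hvF' : v ∈ F' := hF'.2 (mem_insert_self v σ)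
      have hh' : F.erase v = F'.erase v := hh
      rw [← Finset.insert_erase hvF, ← Finset.insert_erase hvF', hh']
  omega

lemma nonadj_common {K : Finset (Finset V)} {d : ℕ} (hK : IsComplex K)
    (hpure : IsPure K d) (hflag : IsFlag K) (hns : NoSquare K)
    {v g : V} (hvg : ({v, g} : Finset V) ∉ K)
    {τ τ' : Finset V} (hvτ : v ∉ τ) (hvτ' : v ∉ τ')
    (hτc : τ.card = d)
    (h1 : insert v τ ∈ K) (h1' : insert v τ' ∈ K)
    (h2 : insert g τ ∈ K) (h2' : insert g τ' ∈ K) :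
    τ' ⊆ τ := by
  have hvg' : v ≠ g := by
    rintro rfl
    exact hvg (hK.2 _ h1 _ (by simp))
  have hgτ : g ∉ τ := fun h => hvg (edge_mem hK h1 (mem_insert_self v τ) (mem_insert_of_mem h))
  have hgτ' : g ∉ τ' := fun h => hvg (edge_mem hK h1' (mem_insert_self v τ') (mem_insert_of_mem h))
  -- key: any vertex of τ and any vertex of τ' are joined
  have key : ∀ u ∈ τ, ∀ w ∈ τ', u ≠ w → ({u, w} : Finset V) ∈ K := by
    intro u hu w hw huw
    by_contra huwK
    have huv : u ≠ v := fun h => hvτ (h ▸ hu)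
    have hwv : w ≠ v := fun h => hvτ' (h ▸ hw)
    have hug : u ≠ g := fun h => hgτ (h ▸ hu)
    have hwg : w ≠ g := fun h => hgτ' (h ▸ hw)
    exact hns ⟨u, v, w, g,
      card_four' huv huw hug (Ne.symm hwv) hvg' hwg,
      edge_mem hK h1 (mem_insert_of_mem hu) (mem_insert_self v τ),
      edge_mem hK h1' (mem_insert_self v τ') (mem_insert_of_mem hw),
      edge_mem hK h2' (mem_insert_of_mem hw) (mem_insert_self g τ'),
      edge_mem hK h2 (mem_insert_self g τ) (mem_insert_of_mem hu),
      huwK, hvg⟩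
  -- the union with v is a face
  have hbig : insert v (τ ∪ τ') ∈ K := by
    apply hflag
    · intro u hu
      rcases mem_insert.mp hu with hu' | hu'
      · subst hu'; exact hK.2 _ h1 _ (by simp)
      · rcases mem_union.mp hu' with h | h
        · exact hK.2 _ h1 _ (by simp [Finset.singleton_subset_iff, h])
        · exact hK.2 _ h1' _ (by simp [Finset.singleton_subset_iff, h])
    · intro u hu w hw huw
      rcases mem_insert.mp hu with hu' | hu' <;> rcases mem_insert.mp hw with hw' | hw'
      · exact absurd (hu'.trans hw'.symm) huw
      · rw [hu']
        rcases mem_union.mp hw' with h | h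
        · exact edge_mem hK h1 (mem_insert_self v τ) (mem_insert_of_mem h)
        · exact edge_mem hK h1' (mem_insert_self v τ') (mem_insert_of_mem h)
      · rw [hw']
        rcases mem_union.mp hu' with h | h
        · exact edge_mem hK h1 (mem_insert_of_mem h) (mem_insert_self v τ)
        · exact edge_mem hK h1' (mem_insert_of_mem h) (mem_insert_self v τ')
      · rcases mem_union.mp hu' with h | h <;> rcases mem_union.mp hw' with h' | h'
        · exact edge_mem hK h1 (mem_insert_of_mem h) (mem_insert_of_mem h')
        · exact key u h w h' huw
        · rw [Finset.pair_comm]; exact key w h' u h (Ne.symm huw)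
        · exact edge_mem hK h1' (mem_insert_of_mem h) (mem_insert_of_mem h')
  -- cardinality forces τ ∪ τ' = τ
  have hsub : insert v τ ⊆ insert v (τ ∪ τ') :=
    Finset.insert_subset_insert v Finset.subset_union_left
  have hcard1 : (insert v τ).card = d + 1 := by
    rw [Finset.card_insert_of_notMem hvτ, hτc]
  have heq := Finset.eq_of_subset_of_card_le hsub
    (by rw [hcard1]; exact face_card_le hpure hbig)
  intro x hx
  have : x ∈ insert v τ := heq ▸ (mem_insert_of_mem (mem_union_right τ hx))
  rcases mem_insert.mp this with h | h
  · exact absurd (h ▸ hx) hvτ'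
  · exact h

lemma f0_eq {K : Finset (Finset V)} (hK : IsComplex K)
    (hvert : ∀ v : V, ({v} : Finset V) ∈ K) : fNum K 0 = Fintype.card V := by
  unfold fNum
  rw [← Finset.card_univ]
  symm
  apply Finset.card_bij (fun (v : V) _ => ({v} : Finset V))
  · intro v _; simp [hvert v]
  · intro a _ b _ h; exact Finset.singleton_injective h
  · intro σ hσ
    rw [mem_filter] at hσ
    obtain ⟨a, ha⟩ := Finset.card_eq_one.mp hσ.2
    exact ⟨a, mem_univ a, ha.symm⟩

lemma facets_link_card {K : Finset (Finset V)} (hK : IsComplex K) (v : V) :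
    (facets (link K {v})).card = ((facets K).filter fun F => v ∈ F).card := by
  apply Finset.card_bij (fun τ _ => insert v τ)
  · intro τ hτ
    obtain ⟨h1, h2⟩ := (facets_link_iff hK).mp hτ
    simp [mem_filter, h2]
  · intro a ha b hb h
    have ha' := ((facets_link_iff hK).mp ha).1
    have hb' := ((facets_link_iff hK).mp hb).1
    rw [← Finset.erase_insert ha', ← Finset.erase_insert hb', h]
  · intro F hF
    rw [mem_filter] at hF
    refine ⟨F.erase v, (facets_link_iff hK).mpr ⟨notMem_erase v F, ?_⟩, ?_⟩
    · rw [Finset.insert_erase hF.2]; exact hF.1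
    · rw [Finset.insert_erase hF.2]

/-- Recursive step: if every pure `(d-1)`-dimensional flag-no-square simplicial
complex with no free `(d-2)`-faces has at least `s` facets, then every pure
`d`-dimensional flag-no-square simplicial complex with no free `(d-1)`-faces
has more than `s` vertices and satisfies `(d+1) · f_d > s²`. -/
theorem recursive_bounds (d s : ℕ) (hd : 1 ≤ d) (hs : 1 ≤ s)
    (hyp : ∀ (W : Type) [DecidableEq W] [Fintype W] (L : Finset (Finset W)),
      IsComplex L → IsPure L (d - 1) → IsFlag L → NoSquare L →
      NoFree L (d - 1) → s ≤ (facets L).card)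
    {V : Type} [DecidableEq V] [Fintype V] (K : Finset (Finset V))
    (hK : IsComplex K) (hvert : ∀ v : V, ({v} : Finset V) ∈ K)
    (hpure : IsPure K d) (hflag : IsFlag K) (hns : NoSquare K)
    (hfree : NoFree K d) :
    s < fNum K 0 ∧ s ^ 2 < (d + 1) * fNum K d := by
  -- each link has at least s facets
  have hlink : ∀ v : V, s ≤ (facets (link K {v})).card := fun v =>
    hyp V (link K {v}) (link_isComplex hK (hvert v)) (link_isPure hK hd hpure)
      (link_isFlag hK hflag (hvert v)) (link_noSquare hK hflag hns)
      (link_noFree hK hd hfree)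
  have hlink' : ∀ v : V, s ≤ ((facets K).filter fun F => v ∈ F).card := fun v =>
    (facets_link_card hK v) ▸ hlink v
  -- V is nonempty
  obtain ⟨F₀, hF₀, -⟩ := exists_facet hK.1
  have hF₀c := hpure _ hF₀
  have : F₀.Nonempty := Finset.card_pos.mp (by omega)
  obtain ⟨v, -⟩ := this
  -- the second-facet vertex map
  set L := link K {v} with hL
  classical
  have hbex : ∀ τ ∈ facets L, ∃ g : V, g ≠ v ∧ ({v, g} : Finset V) ∉ K ∧ insert g τ ∈ K := by
    intro τ hτ
    obtain ⟨hvτ, hfacK⟩ := (facets_link_iff hK).mp hτ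
    have hτK : τ ∈ K := hK.2 _ (mem_facets'.mp hfacK).1 _ (subset_insert v τ)
    have hτc : τ.card = d := by
      have := hpure _ hfacK
      rw [Finset.card_insert_of_notMem hvτ] at this; omega
    have h2 := hfree τ hτK hτc
    have hmem : insert v τ ∈ (facets K).filter fun F => τ ⊆ F := by
      simp [mem_filter, hfacK, subset_insert]
    obtain ⟨G, hG, hGne⟩ := Finset.exists_mem_ne
        (s := (facets K).filter fun F => τ ⊆ F) (by omega) (insert v τ)
    rw [mem_filter] at hG
    have hGc : G.card = d + 1 := hpure _ hG.1
    have hsd : (G \ τ).card = 1 := by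
      rw [Finset.card_sdiff_of_subset hG.2]; omega
    obtain ⟨g, hg⟩ := Finset.card_eq_one.mp hsd
    have hgG : g ∈ G ∧ g ∉ τ := by
      have : g ∈ G \ τ := hg ▸ mem_singleton_self g
      exact ⟨(Finset.mem_sdiff.mp this).1, (Finset.mem_sdiff.mp this).2⟩
    have hGeq : G = insert g τ := by
      have h1 : G = τ ∪ (G \ τ) := by
        rw [Finset.union_sdiff_of_subset hG.2]
      rw [h1, hg, Finset.union_comm]; rw [← Finset.insert_eq]
    have hGK : G ∈ K := (mem_facets'.mp hG.1).1
    have hgv : g ≠ v := by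
      rintro rfl
      exact hGne (by rw [hGeq])
    refine ⟨g, hgv, ?_, hGeq ▸ hGK⟩
    intro hvgK
    -- then insert v G would be a face of size d + 2
    have hbigK : insert v G ∈ K := by
      apply hflag
      · intro u hu
        rcases mem_insert.mp hu with hu' | hu'
        · rw [hu']; exact hvert v
        · exact hK.2 _ hGK _ (Finset.singleton_subset_iff.mpr hu')
      · intro u hu w hw huw
        rcases mem_insert.mp hu with hu' | hu' <;> rcases mem_insert.mp hw with hw' | hw'
        · exact absurd (hu'.trans hw'.symm) huw
        · rw [hu']
          rcases mem_insert.mp (hGeq ▸ hw') with h | h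
          · rw [h]; exact hvgK
          · exact edge_mem hK (mem_facets'.mp hfacK).1 (mem_insert_self v τ)
              (mem_insert_of_mem h)
        · rw [hw']
          rcases mem_insert.mp (hGeq ▸ hu') with h | h
          · rw [h, Finset.pair_comm]; exact hvgK
          · rw [Finset.pair_comm]
            exact edge_mem hK (mem_facets'.mp hfacK).1 (mem_insert_self v τ)
              (mem_insert_of_mem h)
        · exact edge_mem hK hGK hu' hw'
    have hvG : v ∉ G := by
      rw [hGeq]
      intro h
      rcases mem_insert.mp h with h | h
      · exact hgv h.symm
      · exact hvτ h
    have := face_card_le hpure hbigK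
    rw [Finset.card_insert_of_notMem hvG, hGc] at this
    omega
  -- choose the map and show it is injective
  set f : Finset V → V := fun τ =>
    if h : ∃ g : V, g ≠ v ∧ ({v, g} : Finset V) ∉ K ∧ insert g τ ∈ K then h.choose else v
    with hf
  have hfspec : ∀ τ ∈ facets L, f τ ≠ v ∧ ({v, f τ} : Finset V) ∉ K ∧ insert (f τ) τ ∈ K := by
    intro τ hτ
    have h := hbex τ hτ
    simp only [hf, dif_pos h]
    exact h.choose_spec
  have hdata : ∀ τ ∈ facets L, v ∉ τ ∧ τ.card = d ∧ insert v τ ∈ K := by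
    intro τ hτ
    obtain ⟨hvτ, hfacK⟩ := (facets_link_iff hK).mp hτ
    have hc := hpure _ hfacK
    rw [Finset.card_insert_of_notMem hvτ] at hc
    exact ⟨hvτ, by omega, (mem_facets'.mp hfacK).1⟩
  have hinj : Set.InjOn f (facets L) := by
    intro τ hτ τ' hτ' hff
    rw [mem_coe] at hτ hτ'
    obtain ⟨hg1, hg2, hg3⟩ := hfspec τ hτ
    obtain ⟨hg1', hg2', hg3'⟩ := hfspec τ' hτ'
    obtain ⟨hvτ, hτc, hτv⟩ := hdata τ hτ
    obtain ⟨hvτ', hτc', hτv'⟩ := hdata τ' hτ'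
    have h1 : τ' ⊆ τ := nonadj_common hK hpure hflag hns hg2 hvτ hvτ' hτc hτv hτv' hg3
      (by rw [hff]; exact hg3')
    exact (Finset.eq_of_subset_of_card_le h1 (by omega)).symm
  -- first bound
  have himg : (facets L).image f ⊆ univ.erase v := by
    intro x hx
    obtain ⟨τ, hτ, rfl⟩ := Finset.mem_image.mp hx
    exact Finset.mem_erase.mpr ⟨(hfspec τ hτ).1, mem_univ _⟩
  have hcardV : s + 1 ≤ Fintype.card V := by
    have h1 : (facets L).card = ((facets L).image f).card :=
      (Finset.card_image_of_injOn hinj).symm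
    have h2 := Finset.card_le_card himg
    rw [Finset.card_erase_of_mem (mem_univ v), Finset.card_univ] at h2
    have h3 : s ≤ (facets L).card := hlink v
    have h4 : 1 ≤ Fintype.card V := Fintype.card_pos_iff.mpr ⟨v⟩
    omega
  have hf0 : s < fNum K 0 := by
    rw [f0_eq hK hvert]; omega
  refine ⟨hf0, ?_⟩
  -- second bound: double counting
  have hfd : fNum K d = (facets K).card := by
    unfold fNum; rw [filter_card_eq_facets hpure]
  have hswap : ∑ w : V, ((facets K).filter fun F => w ∈ F).card
      = ∑ F ∈ facets K, F.card := by
    simp only [Finset.card_filter]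
    rw [Finset.sum_comm]
    apply Finset.sum_congr rfl
    intro F _
    rw [Finset.sum_ite_mem, Finset.univ_inter, Finset.sum_const, smul_eq_mul, mul_one]
  have hsum1 : Fintype.card V * s ≤ ∑ w : V, ((facets K).filter fun F => w ∈ F).card := by
    calc Fintype.card V * s = ∑ _w : V, s := by rw [Finset.sum_const, Finset.card_univ,
          smul_eq_mul]
    _ ≤ _ := Finset.sum_le_sum fun w _ => hlink' w
  have hsum2 : ∑ F ∈ facets K, F.card = (d + 1) * (facets K).card := by
    rw [Finset.sum_congr rfl (fun F hF => hpure F hF), Finset.sum_const, smul_eq_mul,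
      Nat.mul_comm]
  have : Fintype.card V * s ≤ (d + 1) * (facets K).card := by
    rw [← hsum2, ← hswap]; exact hsum1
  have hlt : s ^ 2 < Fintype.card V * s := by
    have : s * s < (s + 1) * s := by
      apply Nat.mul_lt_mul_of_lt_of_le (by omega) (le_refl s)
      omega
    calc s ^ 2 = s * s := sq s
    _ < (s + 1) * s := this
    _ ≤ Fintype.card V * s := Nat.mul_le_mul_right s hcardV
  rw [hfd]
  exact lt_of_lt_of_le hlt this
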